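/- Suppose u : V → ℝ is such that for every triangle t ∈ T the lengths ℓ̃ = e^{λ̃/2} on its three edges satisfy the strict triangle inequalities. Then for every w : V → ℝ the second derivative Q(w) of s ↦ E(u + s·w) at s = 0 satisfies Q(w) ≥ 0. If, moreover, every vertex of V belongs to at least one triangle and the graph on V in which i and j are adjacent whenever they are both vertices of a common triangle is connected, then Q(w) = 0 if and only if w is constant; in other words, the Hessian of E at u is positive semidefinite with one-dimensional kernel consisting of the constant functions. -/

import Mathlib

open Real Finset

/-- Milnor's Lobachevsky function. -/
noncomputable def Lob (x : ℝ) : ℝ := -∫ t in (0:ℝ)..x, Real.log |2 * Real.sin t|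

/-- Angle opposite the side of length `a` in a euclidean triangle with side
lengths `a`, `b`, `c`, given by the arccos formula (which, since `Real.arccos`
clamps, also implements the broken-triangle convention). -/
noncomputable def eang (a b c : ℝ) : ℝ := Real.arccos ((b^2 + c^2 - a^2) / (2*b*c))

/-- The extended triangle function `f`. -/
noncomputable def fTri (p : ℝ × ℝ × ℝ) : ℝ :=
  eang (Real.exp p.1) (Real.exp p.2.1) (Real.exp p.2.2) * p.1 +
  eang (Real.exp p.2.1) (Real.exp p.2.2) (Real.exp p.1) * p.2.1 +
  eang (Real.exp p.2.2) (Real.exp p.1) (Real.exp p.2.1) * p.2.2 +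
  Lob (eang (Real.exp p.1) (Real.exp p.2.1) (Real.exp p.2.2)) +
  Lob (eang (Real.exp p.2.1) (Real.exp p.2.2) (Real.exp p.1)) +
  Lob (eang (Real.exp p.2.2) (Real.exp p.1) (Real.exp p.2.1))

/-- The modified logarithmic lengths `λ̃_{ij} = λ_{ij} + u_i + u_j`. -/
def lamT {V : Type*} (lam : V → V → ℝ) (u : V → ℝ) (i j : V) : ℝ :=
  lam i j + u i + u j

/-- The modified lengths `ℓ̃_{ij} = e^{λ̃_{ij}/2}`. -/
noncomputable def ellT {V : Type*} (lam : V → V → ℝ) (u : V → ℝ) (i j : V) : ℝ :=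
  Real.exp (lamT lam u i j / 2)

/-- The angle at the vertex `i` in the euclidean triangle `ijk` with side
lengths `ℓ̃_{ij}, ℓ̃_{jk}, ℓ̃_{ki}` (extended by the broken-triangle convention). -/
noncomputable def angAt {V : Type*} (lam : V → V → ℝ) (u : V → ℝ) (i j k : V) : ℝ :=
  eang (ellT lam u j k) (ellT lam u k i) (ellT lam u i j)

/-- The function `E_{T,Θ,λ}(u)` of the first variational principle. -/
noncomputable def Efun {V T : Type*} [Fintype V] [Fintype T]
    (tv : T → V × V × V) (lam : V → V → ℝ) (Θ : V → ℝ) (u : V → ℝ) : ℝ :=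
  (∑ t : T,
    (2 * fTri (lamT lam u (tv t).1 (tv t).2.1 / 2,
               lamT lam u (tv t).2.1 (tv t).2.2 / 2,
               lamT lam u (tv t).2.2 (tv t).1 / 2)
      - (π/2) * (lamT lam u (tv t).1 (tv t).2.1
               + lamT lam u (tv t).2.1 (tv t).2.2
               + lamT lam u (tv t).2.2 (tv t).1)))
  + ∑ i : V, Θ i * u i

/-! ### Auxiliary lemmas -/

noncomputable def her (a b c : ℝ) : ℝ := (a+b+c)*(b+c-a)*(a+b-c)*(a-b+c)

lemma her_pos {a b c : ℝ} (ha : 0 < a) (h1 : a < b + c) (h2 : b < c + a) (h3 : c < a + b) :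
    0 < her a b c := by
  unfold her
  have : 0 < a + b + c := by linarith
  exact mul_pos (mul_pos (mul_pos this (by linarith)) (by linarith)) (by linarith)

lemma her_cyc (a b c : ℝ) : her b c a = her a b c := by unfold her; ring

lemma R_lt_one {a b c : ℝ} (hb : 0 < b) (hc : 0 < c) (h2 : b < c + a) (h3 : c < a + b) :
    (b^2 + c^2 - a^2) / (2*b*c) < 1 := by
  rw [div_lt_one (by positivity)]; nlinarith

lemma neg_one_lt_R {a b c : ℝ} (hb : 0 < b) (hc : 0 < c) (h1 : a < b + c) (ha : 0 < a) :
    -1 < (b^2 + c^2 - a^2) / (2*b*c) := by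
  rw [lt_div_iff₀ (by positivity)]; nlinarith

lemma sqrt_one_sub_R_sq {a b c : ℝ} (ha : 0 < a) (hb : 0 < b) (hc : 0 < c)
    (h1 : a < b + c) (h2 : b < c + a) (h3 : c < a + b) :
    Real.sqrt (1 - ((b^2 + c^2 - a^2) / (2*b*c))^2) = Real.sqrt (her a b c) / (2*b*c) := by
  have hbc : (0:ℝ) < 2*b*c := by positivity
  have h : 1 - ((b^2 + c^2 - a^2) / (2*b*c))^2 = her a b c / (2*b*c)^2 := by
    field_simp; unfold her; ring
  rw [h, Real.sqrt_div (le_of_lt (her_pos ha h1 h2 h3)), Real.sqrt_sq hbc.le]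

lemma sin_eang {a b c : ℝ} (ha : 0 < a) (hb : 0 < b) (hc : 0 < c)
    (h1 : a < b + c) (h2 : b < c + a) (h3 : c < a + b) :
    Real.sin (eang a b c) = Real.sqrt (her a b c) / (2*b*c) := by
  rw [eang, Real.sin_arccos]
  exact sqrt_one_sub_R_sq ha hb hc h1 h2 h3

lemma log_two_sin_eang {a b c : ℝ} (ha : 0 < a) (hb : 0 < b) (hc : 0 < c)
    (h1 : a < b + c) (h2 : b < c + a) (h3 : c < a + b) :
    Real.log (2 * Real.sin (eang a b c))
      = Real.log (Real.sqrt (her a b c)) - Real.log b - Real.log c := by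
  rw [sin_eang ha hb hc h1 h2 h3]
  have hH : 0 < her a b c := her_pos ha h1 h2 h3
  have hsH : 0 < Real.sqrt (her a b c) := Real.sqrt_pos.2 hH
  rw [show 2 * (Real.sqrt (her a b c) / (2*b*c)) = Real.sqrt (her a b c) / (b*c) by
    field_simp]
  rw [Real.log_div hsH.ne' (by positivity), Real.log_mul hb.ne' hc.ne']
  ring

lemma eang_pos {a b c : ℝ} (hb : 0 < b) (hc : 0 < c) (h2 : b < c + a) (h3 : c < a + b) :
    0 < eang a b c := Real.arccos_pos.2 (R_lt_one hb hc h2 h3)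

lemma eang_lt_pi {a b c : ℝ} (ha : 0 < a) (hb : 0 < b) (hc : 0 < c) (h1 : a < b + c) :
    eang a b c < π := by
  refine lt_of_le_of_ne (Real.arccos_le_pi _) fun h => ?_
  have h' := Real.arccos_eq_pi.1 h
  have := neg_one_lt_R hb hc h1 ha
  linarith

/-! ### The derivative of the Lobachevsky function -/

open MeasureTheory in
lemma intervalIntegrable_neg_log :
    IntervalIntegrable (fun t => -Real.log t) volume 0 (1/2 : ℝ) := by
  apply intervalIntegral.intervalIntegrable_deriv_of_nonneg (g := fun t => t - t * Real.log t)
  · exact (continuous_id.sub Real.continuous_mul_log).continuousOn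
  · intro x hx
    simp only [Set.mem_Ioo] at hx
    have h1 : HasDerivAt (fun t : ℝ => t * Real.log t) (Real.log x + 1) x := by
      have h2 := (hasDerivAt_id x).fun_mul
        (Real.hasDerivAt_log (ne_of_gt (by norm_num at hx ⊢; linarith [hx.1] : (0:ℝ) < x)))
      simpa [mul_inv_cancel₀ (ne_of_gt (by norm_num at hx ⊢; linarith [hx.1] : (0:ℝ) < x)),
        add_comm] using h2
    simpa using (hasDerivAt_id x).fun_sub h1
  · intro x hx
    simp only [Set.mem_Ioo] at hx
    norm_num at hx
    have : Real.log x ≤ 0 := Real.log_nonpos (by linarith [hx.1]) (by linarith [hx.2])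
    linarith

open MeasureTheory in
lemma intervalIntegrable_log_zero (d : ℝ) (hd : 0 < d) (hd2 : d ≤ 1/2) :
    IntervalIntegrable Real.log volume 0 d := by
  have h : IntervalIntegrable (fun t => -Real.log t) volume 0 d := by
    apply intervalIntegrable_neg_log.mono_set
    rw [Set.uIcc_of_le hd.le, Set.uIcc_of_le (by norm_num)]
    exact Set.Icc_subset_Icc le_rfl hd2
  have h2 := h.neg
  have : (-fun t => -Real.log t) = Real.log := by funext t; simp
  rwa [this] at h2

lemma cont_logAbsSin : ∀ x ∈ Set.Ioo (0:ℝ) π,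
    ContinuousAt (fun t => Real.log |2 * Real.sin t|) x := by
  intro x hx
  have hs : 0 < Real.sin x := Real.sin_pos_of_pos_of_lt_pi hx.1 hx.2
  have : |2 * Real.sin x| ≠ 0 := by positivity
  exact ContinuousAt.log ((continuous_const.mul Real.continuous_sin).abs.continuousAt) this

open MeasureTheory in
lemma intervalIntegrable_logAbsSin {θ : ℝ} (h0 : 0 < θ) (hπ : θ < π) :
    IntervalIntegrable (fun t => Real.log |2 * Real.sin t|) volume 0 θ := by
  set d : ℝ := min θ (1/2) with hd
  have hd0 : 0 < d := lt_min h0 (by norm_num)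
  have hd2 : d ≤ 1/2 := min_le_right _ _
  have hdθ : d ≤ θ := min_le_left _ _
  have hmeas : AEStronglyMeasurable (fun t => Real.log |2 * Real.sin t|)
      (volume.restrict (Set.uIoc (0:ℝ) d)) :=
    (Real.measurable_log.comp ((measurable_const.mul Real.measurable_sin).abs)).aestronglyMeasurable
  have part1 : IntervalIntegrable (fun t => Real.log |2 * Real.sin t|) volume 0 d := by
    apply IntervalIntegrable.mono_fun (intervalIntegrable_log_zero d hd0 hd2) hmeas
    rw [Set.uIoc_of_le hd0.le]
    filter_upwards [ae_restrict_mem measurableSet_Ioc] with t ht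
    obtain ⟨ht0, htd⟩ := ht
    have ht12 : t ≤ 1/2 := le_trans htd hd2
    have hj : 2/π * t ≤ Real.sin t := Real.mul_le_sin ht0.le (by linarith [Real.pi_gt_three])
    have hπ4 : (π:ℝ) ≤ 4 := by linarith [Real.pi_lt_d2]
    have hlow : t ≤ 2 * Real.sin t := by
      have : 2 * (2/π * t) ≤ 2 * Real.sin t := by linarith
      have h4 : t ≤ 2 * (2/π*t) := by
        rw [show 2*(2/π*t) = 4*t/π by ring]
        rw [le_div_iff₀ (by positivity)]
        nlinarith
      linarith
    have hup : 2 * Real.sin t ≤ 1 := by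
      have := Real.sin_le ht0.le
      linarith
    have habs : |2 * Real.sin t| = 2 * Real.sin t := abs_of_pos (by linarith)
    rw [Real.norm_eq_abs, Real.norm_eq_abs, habs]
    have hl1 : Real.log t ≤ Real.log (2 * Real.sin t) := Real.log_le_log (by linarith) hlow
    have hl2 : Real.log (2 * Real.sin t) ≤ 0 := Real.log_nonpos (by linarith) hup
    have hl3 : Real.log t ≤ 0 := Real.log_nonpos ht0.le (by linarith)
    rw [abs_of_nonpos hl2, abs_of_nonpos hl3]
    linarith
  have part2 : IntervalIntegrable (fun t => Real.log |2 * Real.sin t|) volume d θ := by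
    apply ContinuousOn.intervalIntegrable
    intro x hx
    rw [Set.uIcc_of_le hdθ] at hx
    exact (cont_logAbsSin x ⟨lt_of_lt_of_le hd0 hx.1, lt_of_le_of_lt hx.2 hπ⟩).continuousWithinAt
  exact part1.trans part2

open MeasureTheory in
lemma hasDerivAt_Lob {θ : ℝ} (h0 : 0 < θ) (hπ : θ < π) :
    HasDerivAt Lob (-Real.log (2 * Real.sin θ)) θ := by
  have hs : 0 < Real.sin θ := Real.sin_pos_of_pos_of_lt_pi h0 hπ
  have hmem : θ ∈ Set.Ioo (0:ℝ) π := ⟨h0, hπ⟩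
  have hm : StronglyMeasurableAtFilter (fun t => Real.log |2 * Real.sin t|) (nhds θ) volume :=
    ((Real.measurable_log.comp
      ((measurable_const.mul Real.measurable_sin).abs)).stronglyMeasurable).stronglyMeasurableAtFilter
  have h := intervalIntegral.integral_hasDerivAt_right (intervalIntegrable_logAbsSin h0 hπ)
      hm (cont_logAbsSin θ hmem)
  have h2 := h.neg
  have : |2 * Real.sin θ| = 2 * Real.sin θ := abs_of_pos (by linarith)
  rw [this] at h2
  exact h2

/-! ### Derivatives of angles and of `fTri` along lines -/

lemma hasDerivAt_expAff (x v s₀ : ℝ) :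
    HasDerivAt (fun s : ℝ => Real.exp (x + s * v)) (Real.exp (x + s₀ * v) * v) s₀ := by
  have h : HasDerivAt (fun s : ℝ => x + s * v) v s₀ := by
    simpa using ((hasDerivAt_id s₀).mul_const v).const_add x
  exact h.exp

lemma hasDerivAt_eangLine (x y z v₁ v₂ v₃ : ℝ)
    (h1 : Real.exp x < Real.exp y + Real.exp z)
    (h2 : Real.exp y < Real.exp z + Real.exp x)
    (h3 : Real.exp z < Real.exp x + Real.exp y) :
    HasDerivAt (fun s : ℝ => eang (Real.exp (x + s*v₁)) (Real.exp (y + s*v₂)) (Real.exp (z + s*v₃)))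
      ((2*(Real.exp x)^2*v₁ - ((Real.exp x)^2+(Real.exp y)^2-(Real.exp z)^2)*v₂
        - ((Real.exp x)^2+(Real.exp z)^2-(Real.exp y)^2)*v₃)
        / Real.sqrt (her (Real.exp x) (Real.exp y) (Real.exp z))) 0 := by
  have ha : 0 < Real.exp x := Real.exp_pos x
  have hb : 0 < Real.exp y := Real.exp_pos y
  have hc : 0 < Real.exp z := Real.exp_pos z
  have hH : 0 < her (Real.exp x) (Real.exp y) (Real.exp z) := her_pos ha h1 h2 h3
  have hsH : 0 < Real.sqrt (her (Real.exp x) (Real.exp y) (Real.exp z)) := Real.sqrt_pos.2 hH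
  have hA : HasDerivAt (fun s : ℝ => Real.exp (x + s*v₁)) (Real.exp x * v₁) 0 := by
    have := hasDerivAt_expAff x v₁ 0; norm_num at this; exact this
  have hB : HasDerivAt (fun s : ℝ => Real.exp (y + s*v₂)) (Real.exp y * v₂) 0 := by
    have := hasDerivAt_expAff y v₂ 0; norm_num at this; exact this
  have hC : HasDerivAt (fun s : ℝ => Real.exp (z + s*v₃)) (Real.exp z * v₃) 0 := by
    have := hasDerivAt_expAff z v₃ 0; norm_num at this; exact this
  have hnum : HasDerivAt (fun s : ℝ =>
      Real.exp (y + s*v₂)^2 + Real.exp (z + s*v₃)^2 - Real.exp (x + s*v₁)^2)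
      (2*(Real.exp y)^2*v₂ + 2*(Real.exp z)^2*v₃ - 2*(Real.exp x)^2*v₁) 0 := by
    have h' := ((hB.fun_pow 2).fun_add (hC.fun_pow 2)).fun_sub (hA.fun_pow 2)
    norm_num at h'
    refine h'.congr_deriv ?_
    ring
  have hden : HasDerivAt (fun s : ℝ => 2 * Real.exp (y + s*v₂) * Real.exp (z + s*v₃))
      (2*(Real.exp y)*(Real.exp z)*(v₂+v₃)) 0 := by
    have h' := (hB.const_mul 2).fun_mul hC
    norm_num at h'
    refine h'.congr_deriv ?_
    ring
  have hdenne : (2 * Real.exp (y + (0:ℝ)*v₂) * Real.exp (z + (0:ℝ)*v₃)) ≠ 0 := by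
    positivity
  have hR := hnum.fun_div hden hdenne
  have hR0 : (Real.exp (y + (0:ℝ)*v₂)^2 + Real.exp (z + (0:ℝ)*v₃)^2 - Real.exp (x + (0:ℝ)*v₁)^2)
        / (2 * Real.exp (y + (0:ℝ)*v₂) * Real.exp (z + (0:ℝ)*v₃))
      = ((Real.exp y)^2+(Real.exp z)^2-(Real.exp x)^2)/(2*(Real.exp y)*(Real.exp z)) := by
    norm_num
  have hlt : ((Real.exp y)^2+(Real.exp z)^2-(Real.exp x)^2)/(2*(Real.exp y)*(Real.exp z)) < 1 :=
    R_lt_one hb hc h2 h3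
  have hgt : (-1:ℝ)
      < ((Real.exp y)^2+(Real.exp z)^2-(Real.exp x)^2)/(2*(Real.exp y)*(Real.exp z)) :=
    neg_one_lt_R hb hc h1 ha
  have harccos := Real.hasDerivAt_arccos
    (x := ((Real.exp y)^2+(Real.exp z)^2-(Real.exp x)^2)/(2*(Real.exp y)*(Real.exp z)))
    (by linarith) (by linarith)
  rw [← hR0] at harccos
  have hcomp := harccos.comp 0 hR
  have hfun : (Real.arccos ∘ fun s : ℝ =>
      (Real.exp (y + s*v₂)^2 + Real.exp (z + s*v₃)^2 - Real.exp (x + s*v₁)^2)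
        / (2 * Real.exp (y + s*v₂) * Real.exp (z + s*v₃)))
      = (fun s : ℝ => eang (Real.exp (x + s*v₁)) (Real.exp (y + s*v₂)) (Real.exp (z + s*v₃))) := by
    funext s; simp only [Function.comp_apply, eang]
  rw [hfun] at hcomp
  refine hcomp.congr_deriv ?_
  rw [hR0, sqrt_one_sub_R_sq ha hb hc h1 h2 h3]
  have hbc : (0:ℝ) < 2 * Real.exp y * Real.exp z := by positivity
  norm_num
  field_simp
  ring

lemma hasDerivAt_fTriLine (x y z v₁ v₂ v₃ : ℝ)
    (h1 : Real.exp x < Real.exp y + Real.exp z)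
    (h2 : Real.exp y < Real.exp z + Real.exp x)
    (h3 : Real.exp z < Real.exp x + Real.exp y) :
    HasDerivAt (fun s : ℝ => fTri (x + s*v₁, y + s*v₂, z + s*v₃))
      (eang (Real.exp x) (Real.exp y) (Real.exp z) * v₁
        + eang (Real.exp y) (Real.exp z) (Real.exp x) * v₂
        + eang (Real.exp z) (Real.exp x) (Real.exp y) * v₃) 0 := by
  have ha : 0 < Real.exp x := Real.exp_pos x
  have hb : 0 < Real.exp y := Real.exp_pos y
  have hc : 0 < Real.exp z := Real.exp_pos z
  have hA := hasDerivAt_eangLine x y z v₁ v₂ v₃ h1 h2 h3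
  have hB := hasDerivAt_eangLine y z x v₂ v₃ v₁ h2 h3 h1
  have hC := hasDerivAt_eangLine z x y v₃ v₁ v₂ h3 h1 h2
  have haff1 : HasDerivAt (fun s : ℝ => x + s*v₁) v₁ 0 := by
    simpa using ((hasDerivAt_id (0:ℝ)).mul_const v₁).const_add x
  have haff2 : HasDerivAt (fun s : ℝ => y + s*v₂) v₂ 0 := by
    simpa using ((hasDerivAt_id (0:ℝ)).mul_const v₂).const_add y
  have haff3 : HasDerivAt (fun s : ℝ => z + s*v₃) v₃ 0 := by
    simpa using ((hasDerivAt_id (0:ℝ)).mul_const v₃).const_add z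
  have hLobA := hasDerivAt_Lob (eang_pos hb hc h2 h3) (eang_lt_pi ha hb hc h1)
  have hLobB := hasDerivAt_Lob (eang_pos hc ha h3 h1) (eang_lt_pi hb hc ha h2)
  have hLobC := hasDerivAt_Lob (eang_pos ha hb h1 h2) (eang_lt_pi hc ha hb h3)
  have hvalA : eang (Real.exp x) (Real.exp y) (Real.exp z)
      = eang (Real.exp (x + (0:ℝ)*v₁)) (Real.exp (y + (0:ℝ)*v₂)) (Real.exp (z + (0:ℝ)*v₃)) := by
    norm_num
  have hvalB : eang (Real.exp y) (Real.exp z) (Real.exp x)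
      = eang (Real.exp (y + (0:ℝ)*v₂)) (Real.exp (z + (0:ℝ)*v₃)) (Real.exp (x + (0:ℝ)*v₁)) := by
    norm_num
  have hvalC : eang (Real.exp z) (Real.exp x) (Real.exp y)
      = eang (Real.exp (z + (0:ℝ)*v₃)) (Real.exp (x + (0:ℝ)*v₁)) (Real.exp (y + (0:ℝ)*v₂)) := by
    norm_num
  rw [hvalA] at hLobA
  rw [hvalB] at hLobB
  rw [hvalC] at hLobC
  have hLA := hLobA.comp 0 hA
  have hLB := hLobB.comp 0 hB
  have hLC := hLobC.comp 0 hC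
  have total := (((((hA.fun_mul haff1).fun_add (hB.fun_mul haff2)).fun_add (hC.fun_mul haff3)).fun_add hLA).fun_add hLB).fun_add hLC
  have hfun : (fun s : ℝ =>
      (eang (Real.exp (x + s*v₁)) (Real.exp (y + s*v₂)) (Real.exp (z + s*v₃)) * (x + s*v₁)
        + eang (Real.exp (y + s*v₂)) (Real.exp (z + s*v₃)) (Real.exp (x + s*v₁)) * (y + s*v₂))
        + eang (Real.exp (z + s*v₃)) (Real.exp (x + s*v₁)) (Real.exp (y + s*v₂)) * (z + s*v₃)
        + (Lob ∘ fun s : ℝ =>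
            eang (Real.exp (x + s*v₁)) (Real.exp (y + s*v₂)) (Real.exp (z + s*v₃))) s
        + (Lob ∘ fun s : ℝ =>
            eang (Real.exp (y + s*v₂)) (Real.exp (z + s*v₃)) (Real.exp (x + s*v₁))) s
        + (Lob ∘ fun s : ℝ =>
            eang (Real.exp (z + s*v₃)) (Real.exp (x + s*v₁)) (Real.exp (y + s*v₂))) s)
      = fun s : ℝ => fTri (x + s*v₁, y + s*v₂, z + s*v₃) := by
    funext s; simp only [fTri, Function.comp_apply]
  rw [hfun] at total
  refine total.congr_deriv ?_
  rw [← hvalA, ← hvalB, ← hvalC]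
  rw [log_two_sin_eang ha hb hc h1 h2 h3, log_two_sin_eang hb hc ha h2 h3 h1,
      log_two_sin_eang hc ha hb h3 h1 h2,
      her_cyc (Real.exp x) (Real.exp y) (Real.exp z),
      ← her_cyc (Real.exp z) (Real.exp x) (Real.exp y),
      Real.log_exp, Real.log_exp, Real.log_exp]
  norm_num
  ring

lemma hasDerivAt_shift {F : ℝ → ℝ} {D s₀ : ℝ} (h : HasDerivAt (fun t => F (s₀ + t)) D 0) :
    HasDerivAt F D s₀ := by
  have hin : HasDerivAt (fun s : ℝ => s - s₀) 1 s₀ := by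
    simpa using (hasDerivAt_id s₀).sub_const s₀
  have h' : HasDerivAt (fun t => F (s₀ + t)) D (s₀ - s₀) := by rwa [sub_self]
  have hcomp := HasDerivAt.comp (h₂ := fun t => F (s₀ + t)) (h := fun s : ℝ => s - s₀) s₀ h' hin
  simp only [Function.comp_def] at hcomp
  have : (fun s : ℝ => F (s₀ + (s - s₀))) = F := by funext s; norm_num
  rw [this] at hcomp
  simpa using hcomp

lemma hasDerivAt_fTriLine_at (x y z v₁ v₂ v₃ s₀ : ℝ)
    (h1 : Real.exp (x + s₀*v₁) < Real.exp (y + s₀*v₂) + Real.exp (z + s₀*v₃))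
    (h2 : Real.exp (y + s₀*v₂) < Real.exp (z + s₀*v₃) + Real.exp (x + s₀*v₁))
    (h3 : Real.exp (z + s₀*v₃) < Real.exp (x + s₀*v₁) + Real.exp (y + s₀*v₂)) :
    HasDerivAt (fun s : ℝ => fTri (x + s*v₁, y + s*v₂, z + s*v₃))
      (eang (Real.exp (x + s₀*v₁)) (Real.exp (y + s₀*v₂)) (Real.exp (z + s₀*v₃)) * v₁
        + eang (Real.exp (y + s₀*v₂)) (Real.exp (z + s₀*v₃)) (Real.exp (x + s₀*v₁)) * v₂
        + eang (Real.exp (z + s₀*v₃)) (Real.exp (x + s₀*v₁)) (Real.exp (y + s₀*v₂)) * v₃) s₀ := by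
  apply hasDerivAt_shift
  have h := hasDerivAt_fTriLine (x + s₀*v₁) (y + s₀*v₂) (z + s₀*v₃) v₁ v₂ v₃ h1 h2 h3
  have hfun : (fun s : ℝ => fTri (x + s₀*v₁ + s*v₁, y + s₀*v₂ + s*v₂, z + s₀*v₃ + s*v₃))
      = (fun t : ℝ => fTri (x + (s₀ + t)*v₁, y + (s₀ + t)*v₂, z + (s₀ + t)*v₃)) := by
    funext s
    have e1 : x + s₀*v₁ + s*v₁ = x + (s₀ + s)*v₁ := by ring
    have e2 : y + s₀*v₂ + s*v₂ = y + (s₀ + s)*v₂ := by ring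
    have e3 : z + s₀*v₃ + s*v₃ = z + (s₀ + s)*v₃ := by ring
    rw [e1, e2, e3]
  rw [hfun] at h
  exact h

/-! ### The per-triangle quadratic form -/

noncomputable def dang (x y z v₁ v₂ v₃ : ℝ) : ℝ :=
  (2*(Real.exp x)^2*v₁ - ((Real.exp x)^2+(Real.exp y)^2-(Real.exp z)^2)*v₂
    - ((Real.exp x)^2+(Real.exp z)^2-(Real.exp y)^2)*v₃)
    / Real.sqrt (her (Real.exp x) (Real.exp y) (Real.exp z))

noncomputable def qQuad (x y z v₁ v₂ v₃ : ℝ) : ℝ :=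
  2 * (dang x y z v₁ v₂ v₃ * v₁ + dang y z x v₂ v₃ v₁ * v₂ + dang z x y v₃ v₁ v₂ * v₃)

lemma qQuad_eq (x y z v₁ v₂ v₃ : ℝ) :
    qQuad x y z v₁ v₂ v₃ = 4 * ((Real.exp x)^2*v₁^2 + (Real.exp y)^2*v₂^2 + (Real.exp z)^2*v₃^2
      - ((Real.exp x)^2+(Real.exp y)^2-(Real.exp z)^2)*v₁*v₂
      - ((Real.exp y)^2+(Real.exp z)^2-(Real.exp x)^2)*v₂*v₃
      - ((Real.exp x)^2+(Real.exp z)^2-(Real.exp y)^2)*v₃*v₁)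
      / Real.sqrt (her (Real.exp x) (Real.exp y) (Real.exp z)) := by
  unfold qQuad dang
  rw [her_cyc (Real.exp y) (Real.exp z) (Real.exp x),
      her_cyc (Real.exp x) (Real.exp y) (Real.exp z)]
  ring

lemma qQuad_nonneg {x y z : ℝ} (v₁ v₂ v₃ : ℝ)
    (h1 : Real.exp x < Real.exp y + Real.exp z)
    (h2 : Real.exp y < Real.exp z + Real.exp x)
    (h3 : Real.exp z < Real.exp x + Real.exp y) :
    0 ≤ qQuad x y z v₁ v₂ v₃ := by
  have ha : 0 < Real.exp x := Real.exp_pos x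
  have hb : 0 < Real.exp y := Real.exp_pos y
  have hc : 0 < Real.exp z := Real.exp_pos z
  have hH : 0 < her (Real.exp x) (Real.exp y) (Real.exp z) := her_pos ha h1 h2 h3
  have hH' : 0 < (Real.exp x + Real.exp y + Real.exp z) * (Real.exp y + Real.exp z - Real.exp x)
      * (Real.exp x + Real.exp y - Real.exp z) * (Real.exp x - Real.exp y + Real.exp z) := hH
  rw [qQuad_eq]
  apply div_nonneg _ (Real.sqrt_nonneg _)
  nlinarith [sq_nonneg (2*(Real.exp x)^2*(v₁-v₃) - ((Real.exp x)^2+(Real.exp y)^2-(Real.exp z)^2)*(v₂-v₃)),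
    mul_nonneg hH'.le (sq_nonneg (v₂-v₃)), mul_pos ha ha, sq_nonneg (v₂-v₃)]

lemma qQuad_eq_zero_iff {x y z : ℝ} (v₁ v₂ v₃ : ℝ)
    (h1 : Real.exp x < Real.exp y + Real.exp z)
    (h2 : Real.exp y < Real.exp z + Real.exp x)
    (h3 : Real.exp z < Real.exp x + Real.exp y) :
    qQuad x y z v₁ v₂ v₃ = 0 ↔ (v₁ = v₂ ∧ v₂ = v₃) := by
  have ha : 0 < Real.exp x := Real.exp_pos x
  have hb : 0 < Real.exp y := Real.exp_pos y
  have hc : 0 < Real.exp z := Real.exp_pos z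
  have hH : 0 < her (Real.exp x) (Real.exp y) (Real.exp z) := her_pos ha h1 h2 h3
  have hH' : 0 < (Real.exp x + Real.exp y + Real.exp z) * (Real.exp y + Real.exp z - Real.exp x)
      * (Real.exp x + Real.exp y - Real.exp z) * (Real.exp x - Real.exp y + Real.exp z) := hH
  have hsH : 0 < Real.sqrt (her (Real.exp x) (Real.exp y) (Real.exp z)) := Real.sqrt_pos.2 hH
  rw [qQuad_eq]
  constructor
  · intro h
    have hF : (Real.exp x)^2*v₁^2 + (Real.exp y)^2*v₂^2 + (Real.exp z)^2*v₃^2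
      - ((Real.exp x)^2+(Real.exp y)^2-(Real.exp z)^2)*v₁*v₂
      - ((Real.exp y)^2+(Real.exp z)^2-(Real.exp x)^2)*v₂*v₃
      - ((Real.exp x)^2+(Real.exp z)^2-(Real.exp y)^2)*v₃*v₁ = 0 := by
      have := (div_eq_zero_iff.1 h).resolve_right hsH.ne'
      linarith
    have h23 : (v₂ - v₃)^2 ≤ 0 := by
      nlinarith [sq_nonneg (2*(Real.exp x)^2*(v₁-v₃)
        - ((Real.exp x)^2+(Real.exp y)^2-(Real.exp z)^2)*(v₂-v₃)), mul_pos ha ha]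
    have hv23 : v₂ = v₃ := by
      have := le_antisymm h23 (sq_nonneg _)
      have := pow_eq_zero_iff (n := 2) (by norm_num) |>.1 this
      linarith [sub_eq_zero.1 this]
    rw [hv23] at hF
    have h13 : (v₁ - v₃)^2 ≤ 0 := by
      nlinarith [mul_pos ha ha]
    have hv13 : v₁ = v₃ := by
      have := le_antisymm h13 (sq_nonneg _)
      have := pow_eq_zero_iff (n := 2) (by norm_num) |>.1 this
      linarith [sub_eq_zero.1 this]
    exact ⟨hv13.trans hv23.symm, hv23⟩
  · rintro ⟨rfl, rfl⟩
    rw [div_eq_zero_iff]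
    left
    ring


/-! ### Per-triangle pieces of `E` along a line -/

noncomputable def EtriLine (x y z v₁ v₂ v₃ s : ℝ) : ℝ :=
  2 * fTri (x + s*v₁, y + s*v₂, z + s*v₃)
    - (π/2) * (2*(x + s*v₁) + 2*(y + s*v₂) + 2*(z + s*v₃))

noncomputable def GtriLine (x y z v₁ v₂ v₃ s : ℝ) : ℝ :=
  2 * (eang (Real.exp (x + s*v₁)) (Real.exp (y + s*v₂)) (Real.exp (z + s*v₃)) * v₁
     + eang (Real.exp (y + s*v₂)) (Real.exp (z + s*v₃)) (Real.exp (x + s*v₁)) * v₂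
     + eang (Real.exp (z + s*v₃)) (Real.exp (x + s*v₁)) (Real.exp (y + s*v₂)) * v₃)
   - (π/2) * (2*v₁ + 2*v₂ + 2*v₃)

lemma hasDerivAt_EtriLine (x y z v₁ v₂ v₃ s₀ : ℝ)
    (h1 : Real.exp (x + s₀*v₁) < Real.exp (y + s₀*v₂) + Real.exp (z + s₀*v₃))
    (h2 : Real.exp (y + s₀*v₂) < Real.exp (z + s₀*v₃) + Real.exp (x + s₀*v₁))
    (h3 : Real.exp (z + s₀*v₃) < Real.exp (x + s₀*v₁) + Real.exp (y + s₀*v₂)) :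
    HasDerivAt (EtriLine x y z v₁ v₂ v₃) (GtriLine x y z v₁ v₂ v₃ s₀) s₀ := by
  unfold EtriLine GtriLine
  have h := (hasDerivAt_fTriLine_at x y z v₁ v₂ v₃ s₀ h1 h2 h3).const_mul 2
  have haff1 : HasDerivAt (fun s : ℝ => x + s*v₁) v₁ s₀ := by
    simpa using ((hasDerivAt_id s₀).mul_const v₁).const_add x
  have haff2 : HasDerivAt (fun s : ℝ => y + s*v₂) v₂ s₀ := by
    simpa using ((hasDerivAt_id s₀).mul_const v₂).const_add y
  have haff3 : HasDerivAt (fun s : ℝ => z + s*v₃) v₃ s₀ := by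
    simpa using ((hasDerivAt_id s₀).mul_const v₃).const_add z
  have hlin : HasDerivAt (fun s : ℝ => (π/2) * (2*(x + s*v₁) + 2*(y + s*v₂) + 2*(z + s*v₃)))
      ((π/2) * (2*v₁ + 2*v₂ + 2*v₃)) s₀ := by
    exact (((haff1.const_mul 2).add (haff2.const_mul 2)).add (haff3.const_mul 2)).const_mul (π/2)
  exact h.sub hlin

lemma hasDerivAt_GtriLine (x y z v₁ v₂ v₃ : ℝ)
    (h1 : Real.exp x < Real.exp y + Real.exp z)
    (h2 : Real.exp y < Real.exp z + Real.exp x)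
    (h3 : Real.exp z < Real.exp x + Real.exp y) :
    HasDerivAt (GtriLine x y z v₁ v₂ v₃) (qQuad x y z v₁ v₂ v₃) 0 := by
  unfold GtriLine
  have hA := hasDerivAt_eangLine x y z v₁ v₂ v₃ h1 h2 h3
  have hB := hasDerivAt_eangLine y z x v₂ v₃ v₁ h2 h3 h1
  have hC := hasDerivAt_eangLine z x y v₃ v₁ v₂ h3 h1 h2
  have h := ((((hA.mul_const v₁).fun_add (hB.mul_const v₂)).fun_add (hC.mul_const v₃)).const_mul
    2).sub_const ((π/2) * (2*v₁ + 2*v₂ + 2*v₃))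
  exact h.congr_deriv rfl

/-! ### The Hessian of `E` along a direction `w` -/

lemma hasDerivAt_deriv_Efun {V T : Type*} [Fintype V] [Fintype T]
    (tv : T → V × V × V) (lam : V → V → ℝ) (Θ : V → ℝ) (u : V → ℝ)
    (htri : ∀ t : T,
      ellT lam u (tv t).1 (tv t).2.1
        < ellT lam u (tv t).2.1 (tv t).2.2 + ellT lam u (tv t).2.2 (tv t).1 ∧
      ellT lam u (tv t).2.1 (tv t).2.2
        < ellT lam u (tv t).2.2 (tv t).1 + ellT lam u (tv t).1 (tv t).2.1 ∧
      ellT lam u (tv t).2.2 (tv t).1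
        < ellT lam u (tv t).1 (tv t).2.1 + ellT lam u (tv t).2.1 (tv t).2.2) (w : V → ℝ) :
    HasDerivAt (deriv fun s : ℝ => Efun tv lam Θ (u + s • w))
      (∑ t : T, qQuad (lamT lam u (tv t).1 (tv t).2.1 / 2) (lamT lam u (tv t).2.1 (tv t).2.2 / 2)
        (lamT lam u (tv t).2.2 (tv t).1 / 2)
        ((w (tv t).1 + w (tv t).2.1)/2) ((w (tv t).2.1 + w (tv t).2.2)/2)
        ((w (tv t).2.2 + w (tv t).1)/2)) 0 := by
  classical
  set X1 : T → ℝ := fun t => lamT lam u (tv t).1 (tv t).2.1 / 2 with hX1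
  set X2 : T → ℝ := fun t => lamT lam u (tv t).2.1 (tv t).2.2 / 2 with hX2
  set X3 : T → ℝ := fun t => lamT lam u (tv t).2.2 (tv t).1 / 2 with hX3
  set W1 : T → ℝ := fun t => (w (tv t).1 + w (tv t).2.1)/2 with hW1
  set W2 : T → ℝ := fun t => (w (tv t).2.1 + w (tv t).2.2)/2 with hW2
  set W3 : T → ℝ := fun t => (w (tv t).2.2 + w (tv t).1)/2 with hW3
  -- rewrite the function in normalized form
  have hfun : (fun s : ℝ => Efun tv lam Θ (u + s • w)) =
      fun s => (∑ t : T, EtriLine (X1 t) (X2 t) (X3 t) (W1 t) (W2 t) (W3 t) s)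
        + ∑ i : V, Θ i * (u i + s * w i) := by
    funext s
    unfold Efun EtriLine
    have e : ∀ (i j : V), lamT lam (u + s • w) i j
        = 2*(lamT lam u i j / 2 + s * ((w i + w j)/2)) := by
      intro i j
      simp only [lamT, Pi.add_apply, Pi.smul_apply, smul_eq_mul]
      ring
    have e2 : ∀ r : ℝ, 2*r/2 = r := fun r => by ring
    congr 1
    apply Finset.sum_congr rfl
    intro t _
    simp only [e, e2, hX1, hX2, hX3, hW1, hW2, hW3]
  rw [hfun]
  -- the triangle inequalities hold in a neighbourhood of 0
  have hP : ∀ᶠ s in nhds (0:ℝ), ∀ t : T,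
      Real.exp (X1 t + s*W1 t) < Real.exp (X2 t + s*W2 t) + Real.exp (X3 t + s*W3 t) ∧
      Real.exp (X2 t + s*W2 t) < Real.exp (X3 t + s*W3 t) + Real.exp (X1 t + s*W1 t) ∧
      Real.exp (X3 t + s*W3 t) < Real.exp (X1 t + s*W1 t) + Real.exp (X2 t + s*W2 t) := by
    rw [Filter.eventually_all]
    intro t
    have hc1 : Continuous fun s : ℝ => Real.exp (X1 t + s*W1 t) :=
      Real.continuous_exp.comp (continuous_const.add (continuous_id.mul continuous_const))
    have hc2 : Continuous fun s : ℝ => Real.exp (X2 t + s*W2 t) :=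
      Real.continuous_exp.comp (continuous_const.add (continuous_id.mul continuous_const))
    have hc3 : Continuous fun s : ℝ => Real.exp (X3 t + s*W3 t) :=
      Real.continuous_exp.comp (continuous_const.add (continuous_id.mul continuous_const))
    obtain ⟨ht1, ht2, ht3⟩ := htri t
    refine Filter.Eventually.and ?_ (Filter.Eventually.and ?_ ?_)
    · refine ContinuousAt.eventually_lt hc1.continuousAt (hc2.add hc3).continuousAt ?_
      simpa [ellT, hX1, hX2, hX3] using ht1
    · refine ContinuousAt.eventually_lt hc2.continuousAt (hc3.add hc1).continuousAt ?_
      simpa [ellT, hX1, hX2, hX3] using ht2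
    · refine ContinuousAt.eventually_lt hc3.continuousAt (hc1.add hc2).continuousAt ?_
      simpa [ellT, hX1, hX2, hX3] using ht3
  -- pointwise derivative near 0
  have hder : ∀ s : ℝ, (∀ t : T,
      Real.exp (X1 t + s*W1 t) < Real.exp (X2 t + s*W2 t) + Real.exp (X3 t + s*W3 t) ∧
      Real.exp (X2 t + s*W2 t) < Real.exp (X3 t + s*W3 t) + Real.exp (X1 t + s*W1 t) ∧
      Real.exp (X3 t + s*W3 t) < Real.exp (X1 t + s*W1 t) + Real.exp (X2 t + s*W2 t)) →
      HasDerivAt (fun s' => (∑ t : T, EtriLine (X1 t) (X2 t) (X3 t) (W1 t) (W2 t) (W3 t) s')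
        + ∑ i : V, Θ i * (u i + s' * w i))
      ((∑ t : T, GtriLine (X1 t) (X2 t) (X3 t) (W1 t) (W2 t) (W3 t) s)
        + ∑ i : V, Θ i * w i) s := by
    intro s hs
    apply HasDerivAt.add
    · apply HasDerivAt.fun_sum
      intro t _
      exact hasDerivAt_EtriLine _ _ _ _ _ _ s (hs t).1 (hs t).2.1 (hs t).2.2
    · apply HasDerivAt.fun_sum
      intro i _
      have : HasDerivAt (fun s' : ℝ => u i + s' * w i) (w i) s := by
        simpa using ((hasDerivAt_id s).mul_const (w i)).const_add (u i)
      simpa using this.const_mul (Θ i)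
  have hev : deriv (fun s : ℝ =>
      (∑ t : T, EtriLine (X1 t) (X2 t) (X3 t) (W1 t) (W2 t) (W3 t) s)
        + ∑ i : V, Θ i * (u i + s * w i))
      =ᶠ[nhds (0:ℝ)] fun s =>
      (∑ t : T, GtriLine (X1 t) (X2 t) (X3 t) (W1 t) (W2 t) (W3 t) s) + ∑ i : V, Θ i * w i := by
    filter_upwards [hP] with s hs
    exact (hder s hs).deriv
  -- derivative of G at 0
  have hQ : HasDerivAt (fun s : ℝ =>
      (∑ t : T, GtriLine (X1 t) (X2 t) (X3 t) (W1 t) (W2 t) (W3 t) s) + ∑ i : V, Θ i * w i)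
      (∑ t : T, qQuad (X1 t) (X2 t) (X3 t) (W1 t) (W2 t) (W3 t)) 0 := by
    apply HasDerivAt.add_const
    apply HasDerivAt.fun_sum
    intro t _
    obtain ⟨ht1, ht2, ht3⟩ := htri t
    exact hasDerivAt_GtriLine _ _ _ _ _ _ (by simpa [ellT, hX1, hX2, hX3] using ht1)
      (by simpa [ellT, hX1, hX2, hX3] using ht2) (by simpa [ellT, hX1, hX2, hX3] using ht3)
  exact hQ.congr_of_eventuallyEq hev

/-- The Hessian of `E` at `u` (where all triangle inequalities hold) is
positive semidefinite; if moreover every vertex lies in a triangle and the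
vertex graph of the triangulation is connected, its kernel consists exactly of
the constant functions. -/
theorem Efun_second_derivative_nonneg_kernel {V T : Type*} [Fintype V] [Fintype T]
    (tv : T → V × V × V)
    (hdist : ∀ t : T, (tv t).1 ≠ (tv t).2.1 ∧ (tv t).2.1 ≠ (tv t).2.2 ∧
      (tv t).2.2 ≠ (tv t).1)
    (lam : V → V → ℝ) (hsym : ∀ i j, lam i j = lam j i) (Θ : V → ℝ)
    (u : V → ℝ)
    (htri : ∀ t : T,
      ellT lam u (tv t).1 (tv t).2.1
        < ellT lam u (tv t).2.1 (tv t).2.2 + ellT lam u (tv t).2.2 (tv t).1 ∧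
      ellT lam u (tv t).2.1 (tv t).2.2
        < ellT lam u (tv t).2.2 (tv t).1 + ellT lam u (tv t).1 (tv t).2.1 ∧
      ellT lam u (tv t).2.2 (tv t).1
        < ellT lam u (tv t).1 (tv t).2.1 + ellT lam u (tv t).2.1 (tv t).2.2) :
    (∀ w : V → ℝ, ∃ Q : ℝ,
      HasDerivAt (deriv fun s : ℝ => Efun tv lam Θ (u + s • w)) Q 0 ∧ 0 ≤ Q) ∧
    (∀ G : SimpleGraph V,
      (∀ i j, G.Adj i j ↔ i ≠ j ∧ ∃ t : T,
        (i = (tv t).1 ∨ i = (tv t).2.1 ∨ i = (tv t).2.2) ∧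
        (j = (tv t).1 ∨ j = (tv t).2.1 ∨ j = (tv t).2.2)) →
      G.Connected →
      (∀ i : V, ∃ t : T, i = (tv t).1 ∨ i = (tv t).2.1 ∨ i = (tv t).2.2) →
      ∀ (w : V → ℝ) (Q : ℝ),
        HasDerivAt (deriv fun s : ℝ => Efun tv lam Θ (u + s • w)) Q 0 →
        (Q = 0 ↔ ∃ c : ℝ, ∀ i, w i = c)) := by
  classical
  have hexp : ∀ t : T,
      (Real.exp (lamT lam u (tv t).1 (tv t).2.1 / 2)
        < Real.exp (lamT lam u (tv t).2.1 (tv t).2.2 / 2)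
          + Real.exp (lamT lam u (tv t).2.2 (tv t).1 / 2)) ∧
      (Real.exp (lamT lam u (tv t).2.1 (tv t).2.2 / 2)
        < Real.exp (lamT lam u (tv t).2.2 (tv t).1 / 2)
          + Real.exp (lamT lam u (tv t).1 (tv t).2.1 / 2)) ∧
      (Real.exp (lamT lam u (tv t).2.2 (tv t).1 / 2)
        < Real.exp (lamT lam u (tv t).1 (tv t).2.1 / 2)
          + Real.exp (lamT lam u (tv t).2.1 (tv t).2.2 / 2)) := by
    intro t
    have := htri t
    simpa [ellT] using this
  have hmaster : ∀ w : V → ℝ, HasDerivAt (deriv fun s : ℝ => Efun tv lam Θ (u + s • w))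
      (∑ t : T, qQuad (lamT lam u (tv t).1 (tv t).2.1 / 2) (lamT lam u (tv t).2.1 (tv t).2.2 / 2)
        (lamT lam u (tv t).2.2 (tv t).1 / 2)
        ((w (tv t).1 + w (tv t).2.1)/2) ((w (tv t).2.1 + w (tv t).2.2)/2)
        ((w (tv t).2.2 + w (tv t).1)/2)) 0 :=
    fun w => hasDerivAt_deriv_Efun tv lam Θ u htri w
  have hterm_nonneg : ∀ (w : V → ℝ) (t : T), 0 ≤ qQuad (lamT lam u (tv t).1 (tv t).2.1 / 2)
      (lamT lam u (tv t).2.1 (tv t).2.2 / 2) (lamT lam u (tv t).2.2 (tv t).1 / 2)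
      ((w (tv t).1 + w (tv t).2.1)/2) ((w (tv t).2.1 + w (tv t).2.2)/2)
      ((w (tv t).2.2 + w (tv t).1)/2) :=
    fun w t => qQuad_nonneg _ _ _ (hexp t).1 (hexp t).2.1 (hexp t).2.2
  have hnonneg : ∀ w : V → ℝ, 0 ≤ ∑ t : T, qQuad (lamT lam u (tv t).1 (tv t).2.1 / 2)
      (lamT lam u (tv t).2.1 (tv t).2.2 / 2) (lamT lam u (tv t).2.2 (tv t).1 / 2)
      ((w (tv t).1 + w (tv t).2.1)/2) ((w (tv t).2.1 + w (tv t).2.2)/2)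
      ((w (tv t).2.2 + w (tv t).1)/2) :=
    fun w => Finset.sum_nonneg fun t _ => hterm_nonneg w t
  constructor
  · intro w
    exact ⟨_, hmaster w, hnonneg w⟩
  · intro G hadj hconn _ w Q hQ
    have hQeq : Q = ∑ t : T, qQuad (lamT lam u (tv t).1 (tv t).2.1 / 2)
        (lamT lam u (tv t).2.1 (tv t).2.2 / 2) (lamT lam u (tv t).2.2 (tv t).1 / 2)
        ((w (tv t).1 + w (tv t).2.1)/2) ((w (tv t).2.1 + w (tv t).2.2)/2)
        ((w (tv t).2.2 + w (tv t).1)/2) := hQ.unique (hmaster w)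
    constructor
    · intro h0
      have hsum : ∑ t : T, qQuad (lamT lam u (tv t).1 (tv t).2.1 / 2)
          (lamT lam u (tv t).2.1 (tv t).2.2 / 2) (lamT lam u (tv t).2.2 (tv t).1 / 2)
          ((w (tv t).1 + w (tv t).2.1)/2) ((w (tv t).2.1 + w (tv t).2.2)/2)
          ((w (tv t).2.2 + w (tv t).1)/2) = 0 := by rw [← hQeq]; exact h0
      have hall := (Finset.sum_eq_zero_iff_of_nonneg fun t _ => hterm_nonneg w t).1 hsum
      have htrieq : ∀ t : T, w (tv t).1 = w (tv t).2.1 ∧ w (tv t).2.1 = w (tv t).2.2 := by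
        intro t
        have h := (qQuad_eq_zero_iff _ _ _ (hexp t).1 (hexp t).2.1 (hexp t).2.2).1
          (hall t (Finset.mem_univ t))
        obtain ⟨ha1, ha2⟩ := h
        constructor <;> linarith
      have hadjEq : ∀ i j : V, G.Adj i j → w i = w j := by
        intro i j hij
        obtain ⟨hne, t, hi, hj⟩ := (hadj i j).1 hij
        obtain ⟨e1, e2⟩ := htrieq t
        rcases hi with hi|hi|hi <;> rcases hj with hj|hj|hj <;> rw [hi, hj] <;> linarith
      have hreach : ∀ i j : V, w i = w j := by
        intro i j
        obtain ⟨p⟩ := hconn.preconnected i j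
        induction p with
        | nil => rfl
        | cons h p ih => exact (hadjEq _ _ h).trans ih
      have : Nonempty V := hconn.nonempty
      exact ⟨w (Classical.arbitrary V), fun i => hreach i _⟩
    · rintro ⟨c, hc⟩
      rw [hQeq]
      apply Finset.sum_eq_zero
      intro t _
      apply (qQuad_eq_zero_iff _ _ _ (hexp t).1 (hexp t).2.1 (hexp t).2.2).2
      rw [hc (tv t).1, hc (tv t).2.1, hc (tv t).2.2]
      constructor <;> ring
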